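/- arXiv:2102.08577 — 3 statements merged into one kernel-verified Lean document; each statement's English description precedes it below -/
import Mathlib

section
/- If a mixed strategy σ* attains the maximin value, i.e., σ* maximizes σ ↦ min over j in κ of ∑ i, σ i * U i j over the simplex on ι, and a mixed strategy τ* attains the minimax value, i.e., τ* minimizes τ ↦ max over i in ι of ∑ j, τ j * U i j over the simplex on κ, then (σ*, τ*) is a mixed Nash equilibrium and U(σ*, τ*) equals the game value v = max_σ min_τ U(σ, τ). -/
open Finset

/-- Expected payoff of the matrix game `U` under mixed strategies `σ` and `τ`. -/
def pay {ι κ : Type*} [Fintype ι] [Fintype κ] (U : ι → κ → ℝ) (σ : ι → ℝ) (τ : κ → ℝ) : ℝ :=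
  ∑ i, ∑ j, σ i * τ j * U i j

/-- `(σ, τ)` is a mixed Nash equilibrium of the zero-sum matrix game `U`. -/
def isNE {ι κ : Type*} [Fintype ι] [Fintype κ] (U : ι → κ → ℝ) (σ : ι → ℝ) (τ : κ → ℝ) : Prop :=
  σ ∈ stdSimplex ℝ ι ∧ τ ∈ stdSimplex ℝ κ ∧
    (∀ σ' ∈ stdSimplex ℝ ι, pay U σ' τ ≤ pay U σ τ) ∧
    (∀ τ' ∈ stdSimplex ℝ κ, pay U σ τ ≤ pay U σ τ')

section aux

variable {ι κ : Type*} [Fintype ι] [Fintype κ]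

lemma pay_eq_right (U : ι → κ → ℝ) (σ : ι → ℝ) (τ : κ → ℝ) :
    pay U σ τ = ∑ j, τ j * ∑ i, σ i * U i j := by
  rw [pay, Finset.sum_comm]
  simp only [Finset.mul_sum]
  congr 1; ext j; congr 1; ext i; ring

lemma pay_eq_left (U : ι → κ → ℝ) (σ : ι → ℝ) (τ : κ → ℝ) :
    pay U σ τ = ∑ i, σ i * ∑ j, τ j * U i j := by
  rw [pay]
  simp only [Finset.mul_sum]
  congr 1; ext i; congr 1; ext j; ring

lemma inf'_le_weighted [Nonempty κ] (g : κ → ℝ) {τ : κ → ℝ} (hτ : τ ∈ stdSimplex ℝ κ) :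
    Finset.univ.inf' Finset.univ_nonempty g ≤ ∑ j, τ j * g j := by
  calc Finset.univ.inf' Finset.univ_nonempty g
      = ∑ j, τ j * Finset.univ.inf' Finset.univ_nonempty g := by
        rw [← Finset.sum_mul, hτ.2, one_mul]
    _ ≤ ∑ j, τ j * g j :=
        Finset.sum_le_sum fun j _ => mul_le_mul_of_nonneg_left
          (Finset.inf'_le _ (Finset.mem_univ j)) (hτ.1 j)

lemma weighted_le_sup' [Nonempty ι] (g : ι → ℝ) {σ : ι → ℝ} (hσ : σ ∈ stdSimplex ℝ ι) :
    ∑ i, σ i * g i ≤ Finset.univ.sup' Finset.univ_nonempty g := by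
  calc ∑ i, σ i * g i
      ≤ ∑ i, σ i * Finset.univ.sup' Finset.univ_nonempty g :=
        Finset.sum_le_sum fun i _ => mul_le_mul_of_nonneg_left
          (Finset.le_sup' _ (Finset.mem_univ i)) (hσ.1 i)
    _ = Finset.univ.sup' Finset.univ_nonempty g := by
        rw [← Finset.sum_mul, hσ.2, one_mul]

/-- Key separation lemma (one direction of von Neumann minimax). -/
lemma key [Nonempty ι] [Nonempty κ] (U : ι → κ → ℝ) (c : ℝ)
    (h : ∀ σ ∈ stdSimplex ℝ ι,
      Finset.univ.inf' Finset.univ_nonempty (fun j => ∑ i, σ i * U i j) ≤ c) :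
    ∃ τ ∈ stdSimplex ℝ κ, ∀ i, ∑ j, τ j * U i j ≤ c := by
  classical
  by_contra hcon
  push_neg at hcon
  -- the set K = image of the simplex, every point has a coordinate > c
  set col : κ → (ι → ℝ) := fun j i => U i j with hcol
  set L : (κ → ℝ) → (ι → ℝ) := fun τ => ∑ j, τ j • col j with hL
  have hLapp : ∀ τ i, L τ i = ∑ j, τ j * U i j := by
    intro τ i
    simp [hL, Finset.sum_apply, hcol]
  have hLlin : IsLinearMap ℝ L := by
    constructor
    · intro a b; simp [hL, add_smul, Finset.sum_add_distrib]
    · intro r a; simp [hL, Finset.smul_sum, smul_smul]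
  set K : Set (ι → ℝ) := L '' stdSimplex ℝ κ with hK
  set B : Set (ι → ℝ) := {x | ∀ i, x i ≤ c} with hB
  have hKconv : Convex ℝ K := (convex_stdSimplex ℝ κ).is_linear_image hLlin
  have hKcomp : IsCompact K := by
    apply (isCompact_stdSimplex ℝ κ).image
    exact continuous_pi fun i => by
      simp only [hLapp]
      exact continuous_finset_sum _ fun j _ => (continuous_apply j).mul continuous_const
  have hBconv : Convex ℝ B := by
    have : B = ⋂ i, {x : ι → ℝ | x i ≤ c} := by ext x; simp [hB]
    rw [this]
    exact convex_iInter fun i => convex_halfSpace_le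
      ⟨fun a b => rfl, fun r a => rfl⟩ c
  have hBclosed : IsClosed B := by
    have : B = ⋂ i, {x : ι → ℝ | x i ≤ c} := by ext x; simp [hB]
    rw [this]
    exact isClosed_iInter fun i => isClosed_le (continuous_apply i) continuous_const
  have hdisj : Disjoint K B := by
    rw [Set.disjoint_left]
    rintro x ⟨τ, hτ, rfl⟩ hxB
    obtain ⟨i, hi⟩ := hcon τ hτ
    exact absurd (hxB i) (by rw [hLapp]; exact not_le.2 hi)
  obtain ⟨f, u, v, hKf, huv, hBf⟩ :=
    geometric_hahn_banach_compact_closed hKconv hKcomp hBconv hBclosed hdisj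
  set e : ι → (ι → ℝ) := fun i j => if i = j then 1 else 0 with he
  have hfx : ∀ x : ι → ℝ, f x = ∑ i, x i * f (e i) := by
    intro x
    conv_lhs => rw [pi_eq_sum_univ x]
    rw [map_sum]
    simp [smul_eq_mul, he]
  set σ : ι → ℝ := fun i => -(f (e i)) with hσdef
  have hcone : (fun _ : ι => c) ∈ B := fun i => le_refl c
  -- each σ i ≥ 0
  have hσnn : ∀ i, 0 ≤ σ i := by
    intro i
    by_contra hneg
    push_neg at hneg
    have hfe : 0 < f (e i) := by simpa [hσdef] using hneg
    set t : ℝ := (f (fun _ => c) - v) / f (e i) + 1 with ht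
    have htpos : 0 < t := by
      have h1 : v < f (fun _ => c) := hBf _ hcone
      have h2 : 0 < (f (fun _ => c) - v) / f (e i) := div_pos (by linarith) hfe
      rw [ht]; linarith
    have hbB : ((fun _ : ι => c) - t • e i) ∈ B := by
      intro k
      simp only [Pi.sub_apply, Pi.smul_apply, smul_eq_mul, he]
      by_cases hik : i = k <;> simp [hik] <;> nlinarith
    have := hBf _ hbB
    rw [map_sub, map_smul, smul_eq_mul, ht] at this
    rw [div_add' _ _ _ (ne_of_gt hfe), div_mul_cancel₀ _ (ne_of_gt hfe)] at this
    linarith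
  set s : ℝ := ∑ i, σ i with hs
  -- a point of K
  obtain ⟨j₀⟩ := ‹Nonempty κ›
  have hcolK : ∀ j, col j ∈ K := by
    intro j
    refine ⟨Pi.single j 1, single_mem_stdSimplex ℝ j, ?_⟩
    ext i
    rw [hLapp]
    simp [Pi.single_apply, hcol]
  have hfcol : ∀ j, f (col j) = -∑ i, σ i * U i j := by
    intro j
    rw [hfx]
    simp [hσdef, hcol, Finset.sum_neg_distrib, mul_neg]
    congr 1; ext i; ring
  have hfc : f (fun _ => c) = -(c * s) := by
    rw [hfx, hs]
    simp [hσdef, Finset.mul_sum, mul_neg]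
  have hspos : 0 < s := by
    rcases lt_or_eq_of_le (Finset.sum_nonneg fun i _ => hσnn i) with h | h
    · exact h
    · exfalso
      have hall : ∀ i, σ i = 0 := by
        intro i
        have := Finset.sum_eq_zero_iff_of_nonneg (fun i _ => hσnn i) |>.1 h.symm
        exact this i (Finset.mem_univ i)
      have hf0 : ∀ x : ι → ℝ, f x = 0 := by
        intro x; rw [hfx]
        apply Finset.sum_eq_zero
        intro i _
        have : f (e i) = 0 := by have := hall i; simp [hσdef] at this; linarith
        simp [this]
      have h1 := hKf _ (hcolK j₀)
      have h2 := hBf _ hcone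
      rw [hf0] at h1 h2
      linarith
  -- normalized strategy
  set σ' : ι → ℝ := fun i => σ i / s with hσ'
  have hσ'mem : σ' ∈ stdSimplex ℝ ι := by
    constructor
    · intro i; exact div_nonneg (hσnn i) hspos.le
    · simp only [hσ']
      rw [← Finset.sum_div, ← hs, div_self (ne_of_gt hspos)]
  have hlt : ∀ j, c < ∑ i, σ' i * U i j := by
    intro j
    have h1 := hKf _ (hcolK j)
    have h2 := hBf _ hcone
    rw [hfcol] at h1
    rw [hfc] at h2
    have h3 : c * s < ∑ i, σ i * U i j := by linarith
    have : ∑ i, σ' i * U i j = (∑ i, σ i * U i j) / s := by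
      rw [Finset.sum_div]; congr 1; ext i; rw [hσ']; ring
    rw [this]
    rw [lt_div_iff₀ hspos]
    linarith
  have hle := h σ' hσ'mem
  obtain ⟨j, _, hj⟩ := Finset.exists_mem_eq_inf' (Finset.univ_nonempty)
    (fun j => ∑ i, σ' i * U i j)
  rw [hj] at hle
  exact absurd hle (not_le.2 (hlt j))

end aux

/-- If `σ*` attains the maximin value and `τ*` attains the minimax value, then `(σ*, τ*)`
is a mixed Nash equilibrium, and `U(σ*, τ*)` is the game value `max_σ min_τ U(σ, τ)`. -/
theorem maximin_minimax_optimal_is_NE {ι κ : Type*}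
    [Fintype ι] [Fintype κ] [Nonempty ι] [Nonempty κ] (U : ι → κ → ℝ)
    (σs : ι → ℝ) (τs : κ → ℝ)
    (hσ : σs ∈ stdSimplex ℝ ι) (hτ : τs ∈ stdSimplex ℝ κ)
    (hσmax : ∀ σ ∈ stdSimplex ℝ ι,
      Finset.univ.inf' Finset.univ_nonempty (fun j => ∑ i, σ i * U i j) ≤
      Finset.univ.inf' Finset.univ_nonempty (fun j => ∑ i, σs i * U i j))
    (hτmin : ∀ τ ∈ stdSimplex ℝ κ,
      Finset.univ.sup' Finset.univ_nonempty (fun i => ∑ j, τs j * U i j) ≤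
      Finset.univ.sup' Finset.univ_nonempty (fun i => ∑ j, τ j * U i j)) :
    isNE U σs τs ∧
    IsGreatest ((fun σ => sInf ((fun τ => pay U σ τ) '' stdSimplex ℝ κ)) '' stdSimplex ℝ ι)
      (pay U σs τs) := by
  set vlo : ℝ := Finset.univ.inf' Finset.univ_nonempty (fun j => ∑ i, σs i * U i j) with hvlo
  set vhi : ℝ := Finset.univ.sup' Finset.univ_nonempty (fun i => ∑ j, τs j * U i j) with hvhi
  -- strong duality : vhi ≤ vlo
  obtain ⟨τ₀, hτ₀, hτ₀le⟩ := key U vlo hσmax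
  have hτ₀sup : Finset.univ.sup' Finset.univ_nonempty (fun i => ∑ j, τ₀ j * U i j) ≤ vlo := by
    apply Finset.sup'_le
    intro i _
    exact hτ₀le i
  have hduality : vhi ≤ vlo := le_trans (hτmin τ₀ hτ₀) hτ₀sup
  -- weak duality facts
  have hpay_lo : vlo ≤ pay U σs τs := by
    rw [pay_eq_right]
    exact inf'_le_weighted _ hτ
  have hpay_hi : pay U σs τs ≤ vhi := by
    rw [pay_eq_left]
    exact weighted_le_sup' _ hσ
  have hveq : pay U σs τs = vlo := le_antisymm (le_trans hpay_hi hduality) hpay_lo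
  have hveq' : pay U σs τs = vhi := le_antisymm hpay_hi (le_trans hduality hpay_lo)
  -- NE inequalities
  have hNE1 : ∀ σ' ∈ stdSimplex ℝ ι, pay U σ' τs ≤ pay U σs τs := by
    intro σ' hσ'
    rw [pay_eq_left U σ', hveq']
    exact weighted_le_sup' _ hσ'
  have hNE2 : ∀ τ' ∈ stdSimplex ℝ κ, pay U σs τs ≤ pay U σs τ' := by
    intro τ' hτ'
    rw [pay_eq_right U σs τ', hveq]
    exact inf'_le_weighted _ hτ'
  refine ⟨⟨hσ, hτ, hNE1, hNE2⟩, ?_, ?_⟩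
  · -- membership : sInf over τ of pay σs τ equals pay σs τs
    refine ⟨σs, hσ, ?_⟩
    apply IsLeast.csInf_eq
    constructor
    · exact ⟨τs, hτ, rfl⟩
    · rintro y ⟨τ', hτ', rfl⟩
      exact hNE2 τ' hτ'
  · -- upper bound
    rintro y ⟨σ', hσ', rfl⟩
    have hbdd : BddBelow ((fun τ => pay U σ' τ) '' stdSimplex ℝ κ) := by
      refine ⟨Finset.univ.inf' Finset.univ_nonempty (fun j => ∑ i, σ' i * U i j), ?_⟩
      rintro y ⟨τ', hτ', rfl⟩
      show Finset.univ.inf' Finset.univ_nonempty (fun j => ∑ i, σ' i * U i j) ≤ pay U σ' τ'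
      rw [pay_eq_right]
      exact inf'_le_weighted _ hτ'
    calc sInf ((fun τ => pay U σ' τ) '' stdSimplex ℝ κ)
        ≤ pay U σ' τs := csInf_le hbdd ⟨τs, hτ, rfl⟩
      _ ≤ pay U σs τs := hNE1 σ' hσ'
end

section
/- Exact termination correctness of the double oracle algorithm: let Π_r ⊆ ι and Π_c ⊆ κ be nonempty restricted strategy subsets and let (σ*, τ*) be a mixed Nash equilibrium of the restricted game (σ* supported on Π_r, τ* supported on Π_c) with equilibrium payoff v = U(σ*, τ*). If the full-game best-response values do not improve on v, i.e., max over all i in ι of ∑ j, τ* j * U i j ≤ v and min over all j in κ of ∑ i, σ* i * U i j ≥ v, then (σ*, τ*) is a mixed Nash equilibrium of the full game with value v. -/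
open Finset

lemma pay_row {ι κ : Type*} [Fintype ι] [Fintype κ] (U : ι → κ → ℝ) (σ : ι → ℝ) (τ : κ → ℝ) :
    pay U σ τ = ∑ i, σ i * (∑ j, τ j * U i j) := by
  simp [pay, Finset.mul_sum, mul_assoc]

lemma pay_col {ι κ : Type*} [Fintype ι] [Fintype κ] (U : ι → κ → ℝ) (σ : ι → ℝ) (τ : κ → ℝ) :
    pay U σ τ = ∑ j, τ j * (∑ i, σ i * U i j) := by
  rw [pay, Finset.sum_comm]
  refine Finset.sum_congr rfl fun j _ => ?_
  rw [Finset.mul_sum]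
  refine Finset.sum_congr rfl fun i _ => by ring

lemma wavg_le {ι : Type*} [Fintype ι] (σ : ι → ℝ) (hσ : σ ∈ stdSimplex ℝ ι)
    (f : ι → ℝ) (v : ℝ) (hf : ∀ i, f i ≤ v) : ∑ i, σ i * f i ≤ v := by
  calc ∑ i, σ i * f i ≤ ∑ i, σ i * v :=
        Finset.sum_le_sum fun i _ => mul_le_mul_of_nonneg_left (hf i) (hσ.1 i)
    _ = v := by rw [← Finset.sum_mul, hσ.2, one_mul]

lemma le_wavg {ι : Type*} [Fintype ι] (σ : ι → ℝ) (hσ : σ ∈ stdSimplex ℝ ι)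
    (f : ι → ℝ) (v : ℝ) (hf : ∀ i, v ≤ f i) : v ≤ ∑ i, σ i * f i := by
  calc v = ∑ i, σ i * v := by rw [← Finset.sum_mul, hσ.2, one_mul]
    _ ≤ ∑ i, σ i * f i :=
        Finset.sum_le_sum fun i _ => mul_le_mul_of_nonneg_left (hf i) (hσ.1 i)

/-- Exact termination correctness of the double oracle algorithm: if `(σ*, τ*)` is a mixed
Nash equilibrium of the restricted game on nonempty subsets `Pr ⊆ ι`, `Pc ⊆ κ` with payoff
`v = U(σ*, τ*)`, and the full-game best responses do not improve on `v`, then `(σ*, τ*)`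
is a mixed Nash equilibrium of the full game with value `v`. -/
theorem double_oracle_exact_termination {ι κ : Type*}
    [Fintype ι] [Fintype κ] [Nonempty ι] [Nonempty κ] (U : ι → κ → ℝ)
    (Pr : Finset ι) (Pc : Finset κ) (hr : Pr.Nonempty) (hc : Pc.Nonempty)
    (σs : ι → ℝ) (τs : κ → ℝ)
    (hσ : σs ∈ stdSimplex ℝ ι) (hτ : τs ∈ stdSimplex ℝ κ)
    (hσsupp : ∀ i ∉ Pr, σs i = 0) (hτsupp : ∀ j ∉ Pc, τs j = 0)
    (hRestrNE_r : ∀ σ ∈ stdSimplex ℝ ι, (∀ i ∉ Pr, σ i = 0) → pay U σ τs ≤ pay U σs τs)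
    (hRestrNE_c : ∀ τ ∈ stdSimplex ℝ κ, (∀ j ∉ Pc, τ j = 0) → pay U σs τs ≤ pay U σs τ)
    (v : ℝ) (hv : v = pay U σs τs)
    (hBR_r : Finset.univ.sup' Finset.univ_nonempty (fun i => ∑ j, τs j * U i j) ≤ v)
    (hBR_c : v ≤ Finset.univ.inf' Finset.univ_nonempty (fun j => ∑ i, σs i * U i j)) :
    isNE U σs τs ∧
    IsGreatest ((fun σ => sInf ((fun τ => pay U σ τ) '' stdSimplex ℝ κ)) '' stdSimplex ℝ ι)
      v := by
  have hrow : ∀ i, ∑ j, τs j * U i j ≤ v := fun i =>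
    le_trans (Finset.le_sup' (fun i => ∑ j, τs j * U i j) (Finset.mem_univ i)) hBR_r
  have hcol : ∀ j, v ≤ ∑ i, σs i * U i j := fun j =>
    le_trans hBR_c (Finset.inf'_le _ (Finset.mem_univ j))
  have hle : ∀ σ' ∈ stdSimplex ℝ ι, pay U σ' τs ≤ v := fun σ' hσ' => by
    rw [pay_row]; exact wavg_le σ' hσ' _ v hrow
  have hge : ∀ τ' ∈ stdSimplex ℝ κ, v ≤ pay U σs τ' := fun τ' hτ' => by
    rw [pay_col]; exact le_wavg τ' hτ' _ v hcol
  refine ⟨⟨hσ, hτ, fun σ' hσ' => hv ▸ hle σ' hσ', fun τ' hτ' => hv ▸ hge τ' hτ'⟩, ?_, ?_⟩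
  · refine ⟨σs, hσ, ?_⟩
    have : IsLeast ((fun τ => pay U σs τ) '' stdSimplex ℝ κ) v :=
      ⟨⟨τs, hτ, hv.symm⟩, fun x ⟨τ', hτ', hx⟩ => hx ▸ hge τ' hτ'⟩
    exact this.csInf_eq
  · rintro x ⟨σ', hσ', rfl⟩
    have hbdd : BddBelow ((fun τ => pay U σ' τ) '' stdSimplex ℝ κ) := by
      refine ⟨Finset.univ.inf' Finset.univ_nonempty (fun j => ∑ i, σ' i * U i j), ?_⟩
      rintro x ⟨τ', hτ', rfl⟩
      show univ.inf' Finset.univ_nonempty (fun j => ∑ i, σ' i * U i j) ≤ pay U σ' τ'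
      rw [pay_col]
      exact le_wavg τ' hτ' _ _ fun j => Finset.inf'_le _ (Finset.mem_univ j)
    calc sInf ((fun τ => pay U σ' τ) '' stdSimplex ℝ κ) ≤ pay U σ' τs :=
          csInf_le hbdd ⟨τs, hτ, rfl⟩
      _ ≤ v := hle σ' hσ'
end

section
/- ε-approximate termination correctness (Algorithm 2 of DO-GAN): let Π_r ⊆ ι and Π_c ⊆ κ be nonempty restricted strategy subsets, let (σ*, τ*) be a mixed Nash equilibrium of the restricted game with equilibrium payoff v = U(σ*, τ*), and let ε > 0. If genInc = (max over i in ι of ∑ j, τ* j * U i j) − v < ε and disInc = v − (min over j in κ of ∑ i, σ* i * U i j) < ε, then (σ*, τ*) is an ε-Nash equilibrium of the full game: U(σ, τ*) ≤ U(σ*, τ*) + ε for every mixed strategy σ on ι, and U(σ*, τ) ≥ U(σ*, τ*) − ε for every mixed strategy τ on κ. -/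
open Finset

/-- ε-approximate termination correctness of DO-GAN (Algorithm 2): if `(σ*, τ*)` is a mixed
Nash equilibrium of the restricted game with payoff `v = U(σ*, τ*)` and the best-response
utility increments `genInc` and `disInc` are both below `ε`, then `(σ*, τ*)` is an
ε-Nash equilibrium of the full game. -/
theorem double_oracle_eps_termination {ι κ : Type*}
    [Fintype ι] [Fintype κ] [Nonempty ι] [Nonempty κ] (U : ι → κ → ℝ)
    (Pr : Finset ι) (Pc : Finset κ) (hr : Pr.Nonempty) (hc : Pc.Nonempty)
    (σs : ι → ℝ) (τs : κ → ℝ) (ε : ℝ) (hε : 0 < ε)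
    (hσ : σs ∈ stdSimplex ℝ ι) (hτ : τs ∈ stdSimplex ℝ κ)
    (hσsupp : ∀ i ∉ Pr, σs i = 0) (hτsupp : ∀ j ∉ Pc, τs j = 0)
    (hRestrNE_r : ∀ σ ∈ stdSimplex ℝ ι, (∀ i ∉ Pr, σ i = 0) → pay U σ τs ≤ pay U σs τs)
    (hRestrNE_c : ∀ τ ∈ stdSimplex ℝ κ, (∀ j ∉ Pc, τ j = 0) → pay U σs τs ≤ pay U σs τ)
    (v : ℝ) (hv : v = pay U σs τs)
    (hGenInc :
      Finset.univ.sup' Finset.univ_nonempty (fun i => ∑ j, τs j * U i j) - v < ε)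
    (hDisInc :
      v - Finset.univ.inf' Finset.univ_nonempty (fun j => ∑ i, σs i * U i j) < ε) :
    (∀ σ ∈ stdSimplex ℝ ι, pay U σ τs ≤ pay U σs τs + ε) ∧
    (∀ τ ∈ stdSimplex ℝ κ, pay U σs τs - ε ≤ pay U σs τ) := by
  constructor
  · intro σ hσ'
    have hrw : pay U σ τs = ∑ i, σ i * (∑ j, τs j * U i j) := by
      unfold pay; congr 1; ext i; rw [Finset.mul_sum]; congr 1; ext j; ring
    have hle : pay U σ τs ≤
        Finset.univ.sup' Finset.univ_nonempty (fun i => ∑ j, τs j * U i j) := by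
      rw [hrw]
      calc ∑ i, σ i * (∑ j, τs j * U i j)
          ≤ ∑ i, σ i * Finset.univ.sup' Finset.univ_nonempty (fun i => ∑ j, τs j * U i j) := by
            apply Finset.sum_le_sum
            intro i _
            exact mul_le_mul_of_nonneg_left
              (Finset.le_sup' (fun i => ∑ j, τs j * U i j) (Finset.mem_univ i)) (hσ'.1 i)
        _ = Finset.univ.sup' Finset.univ_nonempty (fun i => ∑ j, τs j * U i j) := by
            rw [← Finset.sum_mul, hσ'.2, one_mul]
    linarith [hle]
  · intro τ hτ'
    have hrw : pay U σs τ = ∑ j, τ j * (∑ i, σs i * U i j) := by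
      unfold pay; rw [Finset.sum_comm]; congr 1; ext j
      rw [Finset.mul_sum]; congr 1; ext i; ring
    have hle : Finset.univ.inf' Finset.univ_nonempty (fun j => ∑ i, σs i * U i j)
        ≤ pay U σs τ := by
      rw [hrw]
      calc Finset.univ.inf' Finset.univ_nonempty (fun j => ∑ i, σs i * U i j)
          = ∑ j, τ j * Finset.univ.inf' Finset.univ_nonempty (fun j => ∑ i, σs i * U i j) := by
            rw [← Finset.sum_mul, hτ'.2, one_mul]
        _ ≤ ∑ j, τ j * (∑ i, σs i * U i j) := by
            apply Finset.sum_le_sum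
            intro j _
            exact mul_le_mul_of_nonneg_left
              (Finset.inf'_le (fun j => ∑ i, σs i * U i j) (Finset.mem_univ j)) (hτ'.1 j)
    linarith [hle]
end
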